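/- Consider the 6-dimensional constant-coefficient system dθ⁰ = θ¹∧θ⁴ − 3θ²∧θ³, dθ¹ = ½θ⁰∧θ¹ − 3θ¹∧θ⁸, dθ² = ½θ⁰∧θ² − θ²∧θ⁸, dθ³ = −½θ⁰∧θ³ + θ³∧θ⁸, dθ⁴ = −½θ⁰∧θ⁴ + 3θ⁴∧θ⁸, dθ⁸ = −½θ¹∧θ⁴ + ½θ²∧θ³ (on a 6-dimensional space with coframe θ⁰,θ¹,θ²,θ³,θ⁴,θ⁸). Then d²θⁱ = 0 for all six forms, so the system defines a 6-dimensional Lie algebra; moreover this Lie algebra is isomorphic to sl(2,ℝ) ⊕ sl(2,ℝ). -/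
import Mathlib


/-- The bracket on `ℝ⁶` (with coframe `θ⁰,θ¹,θ²,θ³,θ⁴,θ⁸`, indexed `0,…,4,5`) dual to the
constant-coefficient structure equations
`dθ⁰ = θ¹∧θ⁴ − 3θ²∧θ³`, `dθ¹ = ½θ⁰∧θ¹ − 3θ¹∧θ⁸`, `dθ² = ½θ⁰∧θ² − θ²∧θ⁸`,
`dθ³ = −½θ⁰∧θ³ + θ³∧θ⁸`, `dθ⁴ = −½θ⁰∧θ⁴ + 3θ⁴∧θ⁸`, `dθ⁸ = −½θ¹∧θ⁴ + ½θ²∧θ³`,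
via `[eᵢ,eⱼ] = −Σₖ cᵏᵢⱼ eₖ`. -/
noncomputable def brB (u v : Fin 6 → ℝ) : Fin 6 → ℝ :=
  ![-(u 1 * v 4 - u 4 * v 1) + 3 * (u 2 * v 3 - u 3 * v 2),
    -(1 / 2) * (u 0 * v 1 - u 1 * v 0) + 3 * (u 1 * v 5 - u 5 * v 1),
    -(1 / 2) * (u 0 * v 2 - u 2 * v 0) + (u 2 * v 5 - u 5 * v 2),
    (1 / 2) * (u 0 * v 3 - u 3 * v 0) - (u 3 * v 5 - u 5 * v 3),
    (1 / 2) * (u 0 * v 4 - u 4 * v 0) - 3 * (u 4 * v 5 - u 5 * v 4),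
    (1 / 2) * (u 1 * v 4 - u 4 * v 1) - (1 / 2) * (u 2 * v 3 - u 3 * v 2)]

open LieAlgebra.SpecialLinear Matrix

@[simp] lemma vec6_0 {α} (a b c d e f : α) : (![a,b,c,d,e,f]) 0 = a := rfl
@[simp] lemma vec6_1 {α} (a b c d e f : α) : (![a,b,c,d,e,f]) 1 = b := rfl
@[simp] lemma vec6_2 {α} (a b c d e f : α) : (![a,b,c,d,e,f]) 2 = c := rfl
@[simp] lemma vec6_3 {α} (a b c d e f : α) : (![a,b,c,d,e,f]) 3 = d := rfl
@[simp] lemma vec6_4 {α} (a b c d e f : α) : (![a,b,c,d,e,f]) 4 = e := rfl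
@[simp] lemma vec6_5 {α} (a b c d e f : α) : (![a,b,c,d,e,f]) 5 = f := rfl

@[simp] lemma brB0 (u v : Fin 6 → ℝ) :
    brB u v 0 = -(u 1 * v 4 - u 4 * v 1) + 3 * (u 2 * v 3 - u 3 * v 2) := rfl
@[simp] lemma brB1 (u v : Fin 6 → ℝ) :
    brB u v 1 = -(1 / 2) * (u 0 * v 1 - u 1 * v 0) + 3 * (u 1 * v 5 - u 5 * v 1) := rfl
@[simp] lemma brB2 (u v : Fin 6 → ℝ) :
    brB u v 2 = -(1 / 2) * (u 0 * v 2 - u 2 * v 0) + (u 2 * v 5 - u 5 * v 2) := rfl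
@[simp] lemma brB3 (u v : Fin 6 → ℝ) :
    brB u v 3 = (1 / 2) * (u 0 * v 3 - u 3 * v 0) - (u 3 * v 5 - u 5 * v 3) := rfl
@[simp] lemma brB4 (u v : Fin 6 → ℝ) :
    brB u v 4 = (1 / 2) * (u 0 * v 4 - u 4 * v 0) - 3 * (u 4 * v 5 - u 5 * v 4) := rfl
@[simp] lemma brB5 (u v : Fin 6 → ℝ) :
    brB u v 5 = (1 / 2) * (u 1 * v 4 - u 4 * v 1) - (1 / 2) * (u 2 * v 3 - u 3 * v 2) := rfl

noncomputable def toM1 (u : Fin 6 → ℝ) : Matrix (Fin 2) (Fin 2) ℝ :=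
  !![u 0 / 4 + 3 * u 5 / 2, u 4; -u 1 / 2, -(u 0 / 4 + 3 * u 5 / 2)]

noncomputable def toM2 (u : Fin 6 → ℝ) : Matrix (Fin 2) (Fin 2) ℝ :=
  !![u 0 / 4 + u 5 / 2, u 3; -u 2 / 2, -(u 0 / 4 + u 5 / 2)]

lemma mem_sl (M : Matrix (Fin 2) (Fin 2) ℝ) (h : M 1 1 = -M 0 0) : M ∈ sl (Fin 2) ℝ := by
  show Matrix.trace M = 0
  rw [Matrix.trace, Fin.sum_univ_two]
  simp [Matrix.diag, h]

lemma toM1_mem (u : Fin 6 → ℝ) : toM1 u ∈ sl (Fin 2) ℝ := mem_sl _ (by simp [toM1])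
lemma toM2_mem (u : Fin 6 → ℝ) : toM2 u ∈ sl (Fin 2) ℝ := mem_sl _ (by simp [toM2])

lemma sl2_diag (A : sl (Fin 2) ℝ) : A.val 1 1 = -A.val 0 0 := by
  have h : Matrix.trace A.val = 0 := A.2
  rw [Matrix.trace, Fin.sum_univ_two] at h
  simp only [Matrix.diag] at h
  linarith

noncomputable def F : (Fin 6 → ℝ) ≃ₗ[ℝ] (sl (Fin 2) ℝ × sl (Fin 2) ℝ) where
  toFun u := (⟨toM1 u, toM1_mem u⟩, ⟨toM2 u, toM2_mem u⟩)
  map_add' u v := by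
    refine Prod.ext (Subtype.ext ?_) (Subtype.ext ?_) <;>
      · show _ = _ + _
        ext i j
        fin_cases i <;> fin_cases j <;>
          simp [toM1, toM2, Matrix.add_apply] <;> ring
  map_smul' c u := by
    refine Prod.ext (Subtype.ext ?_) (Subtype.ext ?_) <;>
      · show _ = c • _
        ext i j
        fin_cases i <;> fin_cases j <;>
          simp [toM1, toM2, Matrix.smul_apply] <;> ring
  invFun p :=
    ![6 * p.2.val 0 0 - 2 * p.1.val 0 0, -2 * p.1.val 1 0, -2 * p.2.val 1 0,
      p.2.val 0 1, p.1.val 0 1, p.1.val 0 0 - p.2.val 0 0]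
  left_inv u := by
    funext i
    fin_cases i <;> simp [toM1, toM2] <;> ring
  right_inv p := by
    refine Prod.ext (Subtype.ext ?_) (Subtype.ext ?_)
    · show toM1 _ = _
      ext i j
      fin_cases i <;> fin_cases j <;>
        simp [toM1, sl2_diag p.1] <;> ring
    · show toM2 _ = _
      ext i j
      fin_cases i <;> fin_cases j <;>
        simp [toM2, sl2_diag p.2] <;> ring


set_option maxHeartbeats 1000000 in
/-- The system is closed (`d² = 0`), i.e. the dual bracket is antisymmetric and satisfies
the Jacobi identity, defining a 6-dimensional Lie algebra; moreover this Lie algebra is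
isomorphic to `sl(2,ℝ) ⊕ sl(2,ℝ)`. -/
theorem six_dimensional_model_is_sl2_oplus_sl2 :
    (∀ u v : Fin 6 → ℝ, brB u v = -brB v u) ∧
    (∀ u v w : Fin 6 → ℝ, brB u (brB v w) + brB v (brB w u) + brB w (brB u v) = 0) ∧
    ∃ f : (Fin 6 → ℝ) ≃ₗ[ℝ]
        (LieAlgebra.SpecialLinear.sl (Fin 2) ℝ × LieAlgebra.SpecialLinear.sl (Fin 2) ℝ),
      ∀ u v : Fin 6 → ℝ,
        (f (brB u v)).1 = ⁅(f u).1, (f v).1⁆ ∧ (f (brB u v)).2 = ⁅(f u).2, (f v).2⁆ := by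
  refine ⟨?_, ?_, F, ?_⟩
  · intro u v
    funext i
    fin_cases i <;> simp [brB] <;> ring
  · intro u v w
    funext i
    fin_cases i <;> simp [brB] <;> ring
  · intro u v
    constructor
    · apply Subtype.ext
      show toM1 (brB u v) = toM1 u * toM1 v - toM1 v * toM1 u
      ext i j
      fin_cases i <;> fin_cases j <;>
        simp [toM1, Matrix.mul_apply, Fin.sum_univ_two, Matrix.sub_apply] <;> ring
    · apply Subtype.ext
      show toM2 (brB u v) = toM2 u * toM2 v - toM2 v * toM2 u
      ext i j
      fin_cases i <;> fin_cases j <;>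
        simp [toM2, Matrix.mul_apply, Fin.sum_univ_two, Matrix.sub_apply] <;> ring
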